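/- Let S be a pseudo-regular subspace of a Krein space (H,J), and let Q ∈ L(H) be a J-normal projection with R(Q) = S. Set F = (I − Q)(I − Q)^#. Then S^{[⊥]} = R(F) [∔] S°, where S° is the isotropic part of S; in particular S^{[⊥]} is pseudo-regular. -/

import Mathlib

open ContinuousLinearMap

variable {H : Type*} [NormedAddCommGroup H] [InnerProductSpace ℂ H] [CompleteSpace H]

/-- The `J`-adjoint `T^# = J T* J`. -/
noncomputable def sharp (J T : H →L[ℂ] H) : H →L[ℂ] H :=
  J ∘L (ContinuousLinearMap.adjoint T) ∘L J

/-- The `J`-orthogonal companion `S^{[⊥]} = {f : [g,f] = 0 ∀ g ∈ S}` where `[g,f] = ⟪J g, f⟫`. -/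
def jperp (J : H →L[ℂ] H) (S : Submodule ℂ H) : Submodule ℂ H where
  carrier := {f | ∀ g ∈ S, (inner ℂ (J g) f : ℂ) = 0}
  add_mem' := by
    intro a b ha hb g hg
    rw [inner_add_right, ha g hg, hb g hg, add_zero]
  zero_mem' := by
    intro g hg
    simp
  smul_mem' := by
    intro c a ha g hg
    rw [inner_smul_right, ha g hg, mul_zero]

/-- A (closed) subspace `M` is regular if `M [∔] M^{[⊥]} = H`. -/
def KreinRegular (J : H →L[ℂ] H) (M : Submodule ℂ H) : Prop :=
  IsClosed (M : Set H) ∧ M ⊔ jperp J M = ⊤ ∧ M ⊓ jperp J M = ⊥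

/-- A closed subspace `S` is pseudo-regular if `S = M [∔] S°` for some regular subspace `M`,
where `S° = S ⊓ S^{[⊥]}` is the isotropic part. -/
def KreinPseudoRegular (J : H →L[ℂ] H) (S : Submodule ℂ H) : Prop :=
  IsClosed (S : Set H) ∧ ∃ M : Submodule ℂ H, KreinRegular J M ∧
    M ⊔ (S ⊓ jperp J S) = S ∧ M ⊓ (S ⊓ jperp J S) = ⊥

lemma mem_jperp_iff (J : H →L[ℂ] H) {S : Submodule ℂ H} {f : H} :
    f ∈ jperp J S ↔ ∀ g ∈ S, (inner ℂ (J g) f : ℂ) = 0 := Iff.rfl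

lemma jperp_range (J : H →L[ℂ] H) (hJsa : ContinuousLinearMap.adjoint J = J)
    (hJ2 : J ∘L J = 1) (T : H →L[ℂ] H) :
    jperp J (LinearMap.range (T : H →ₗ[ℂ] H)) = LinearMap.ker (sharp J T : H →ₗ[ℂ] H) := by
  have hJJ : ∀ x : H, J (J x) = x := fun x => by
    have := congrArg (fun A : H →L[ℂ] H => A x) hJ2
    simpa using this
  ext f
  simp only [mem_jperp_iff, LinearMap.mem_ker, sharp, ContinuousLinearMap.coe_coe, comp_apply]
  constructor
  · intro h
    have h1 : ContinuousLinearMap.adjoint T (J f) = 0 := by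
      rw [← inner_self_eq_zero (𝕜 := ℂ)]
      have h2 := h (T (ContinuousLinearMap.adjoint T (J f))) ⟨_, rfl⟩
      have hip := adjoint_inner_left J f (T (ContinuousLinearMap.adjoint T (J f)))
      rw [hJsa] at hip
      rw [hip, ← adjoint_inner_right] at h2
      exact h2
    rw [h1, map_zero]
  · intro h
    have h1 : ContinuousLinearMap.adjoint T (J f) = 0 := by
      have := congrArg J h
      rwa [hJJ, map_zero] at this
    rintro g ⟨x, rfl⟩
    have hip := adjoint_inner_left J f (T x)
    rw [hJsa] at hip
    rw [ContinuousLinearMap.coe_coe, hip, ← adjoint_inner_right, h1, inner_zero_right]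

/-- If `Q` is a `J`-normal projection with range `S` and `F = (I−Q)(I−Q)^#`, then
`S^{[⊥]} = R(F) [∔] S°`; in particular `S^{[⊥]}` is pseudo-regular. -/
theorem stmt11 (J Q : H →L[ℂ] H)
    (hJsa : ContinuousLinearMap.adjoint J = J) (hJ2 : J ∘L J = 1)
    (hQ : Q ∘L Q = Q) (hQn : Q ∘L sharp J Q = sharp J Q ∘L Q)
    (S : Submodule ℂ H) (hS : LinearMap.range (Q : H →ₗ[ℂ] H) = S)
    (F : H →L[ℂ] H) (hF : F = (1 - Q) ∘L sharp J (1 - Q)) :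
    LinearMap.range (F : H →ₗ[ℂ] H) ⊔ (S ⊓ jperp J S) = jperp J S ∧
    LinearMap.range (F : H →ₗ[ℂ] H) ⊓ (S ⊓ jperp J S) = ⊥ ∧
    (∀ f ∈ LinearMap.range (F : H →ₗ[ℂ] H), ∀ g ∈ S ⊓ jperp J S, (inner ℂ (J f) g : ℂ) = 0) ∧
    KreinPseudoRegular J (jperp J S) := by
  have hJJ : ∀ x : H, J (J x) = x := fun x => by
    have := congrArg (fun A : H →L[ℂ] H => A x) hJ2
    simpa using this
  set Qs := sharp J Q with hQsdef
  -- basic sharp calculus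
  have sharp_comp : ∀ A B : H →L[ℂ] H, sharp J (A ∘L B) = sharp J B ∘L sharp J A := by
    intro A B
    ext x
    simp [sharp, adjoint_comp, hJJ]
  have sharp_one : sharp J (1 : H →L[ℂ] H) = 1 := by
    ext x
    simp [sharp, one_def, adjoint_id, hJJ]
  have sharp_sub : ∀ A B : H →L[ℂ] H, sharp J (A - B) = sharp J A - sharp J B := by
    intro A B
    ext x
    simp [sharp, map_sub]
  have sharp_sharp : ∀ T : H →L[ℂ] H, sharp J (sharp J T) = T := by
    intro T
    ext x
    simp [sharp, adjoint_comp, adjoint_adjoint, hJsa, hJJ]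
  have hsharpP : sharp J (1 - Q) = 1 - Qs := by
    rw [sharp_sub, sharp_one]
  -- pointwise facts
  have hq : ∀ x, Q (Q x) = Q x := fun x => by
    have := congrArg (fun A : H →L[ℂ] H => A x) hQ; simpa using this
  have hqs : ∀ x, Qs (Qs x) = Qs x := fun x => by
    have h := congrArg (sharp J) hQ
    rw [sharp_comp] at h
    have := congrArg (fun A : H →L[ℂ] H => A x) h
    simpa [← hQsdef] using this
  have hcomm : ∀ x, Q (Qs x) = Qs (Q x) := fun x => by
    have := congrArg (fun A : H →L[ℂ] H => A x) hQn; simpa [← hQsdef] using this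
  have hFx : ∀ x, F x = x - Qs x - (Q x - Q (Qs x)) := by
    intro x
    rw [hF, hsharpP]
    simp only [comp_apply, sub_apply, ContinuousLinearMap.one_apply, map_sub]
    abel
  have QsF : ∀ x, Qs (F x) = 0 := by
    intro x
    rw [hFx]
    simp [map_sub, hqs, ← hcomm]
  have QF : ∀ x, Q (F x) = 0 := by
    intro x
    rw [hFx]
    simp [map_sub, hq]
  -- membership characterizations
  have memS : ∀ f, f ∈ S ↔ Q f = f := by
    intro f
    rw [← hS]
    constructor
    · rintro ⟨g, rfl⟩; exact hq g
    · intro h; exact ⟨f, h⟩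
  have hjp : jperp J S = LinearMap.ker (Qs : H →ₗ[ℂ] H) := by
    rw [← hS]; exact jperp_range J hJsa hJ2 Q
  have memJ : ∀ f, f ∈ jperp J S ↔ Qs f = 0 := fun f => by
    rw [hjp]; exact LinearMap.mem_ker
  have mem0 : ∀ f, f ∈ S ⊓ jperp J S ↔ Q f = f ∧ Qs f = 0 := fun f => by
    rw [Submodule.mem_inf, memS, memJ]
  -- Part 1
  have part1 : LinearMap.range (F : H →ₗ[ℂ] H) ⊔ (S ⊓ jperp J S) = jperp J S := by
    apply le_antisymm
    · apply sup_le
      · rintro f ⟨g, rfl⟩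
        exact (memJ _).2 (QsF g)
      · exact inf_le_right
    · intro f hf
      have hq0 : Qs f = 0 := (memJ f).1 hf
      have hdec : f = F f + Q f := by
        rw [hFx, hq0]
        simp
      rw [hdec]
      refine Submodule.add_mem_sup ⟨f, rfl⟩ ((mem0 _).2 ⟨hq f, ?_⟩)
      rw [← hcomm, hq0, map_zero]
  -- Part 2
  have part2 : LinearMap.range (F : H →ₗ[ℂ] H) ⊓ (S ⊓ jperp J S) = ⊥ := by
    rw [Submodule.eq_bot_iff]
    intro f hf
    rw [Submodule.mem_inf] at hf
    obtain ⟨⟨g, rfl⟩, h2⟩ := hf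
    have := ((mem0 _).1 h2).1
    rw [ContinuousLinearMap.coe_coe, QF g] at this
    exact this.symm
  -- Part 3
  have part3 : ∀ f ∈ LinearMap.range (F : H →ₗ[ℂ] H), ∀ g ∈ S ⊓ jperp J S, (inner ℂ (J f) g : ℂ) = 0 := by
    rintro f ⟨h, rfl⟩ g hg
    obtain ⟨hqg, hqsg⟩ := (mem0 g).1 hg
    have hQstar : ContinuousLinearMap.adjoint Q (J g) = 0 := by
      have h0 : J (ContinuousLinearMap.adjoint Q (J g)) = 0 := hqsg
      have := congrArg J h0
      rwa [hJJ, map_zero] at this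
    have adj_one : ContinuousLinearMap.adjoint (1 : H →L[ℂ] H) = 1 := by
      rw [one_def, adjoint_id]
    have hQsstar : ContinuousLinearMap.adjoint Qs (J g) = J g := by
      have h1 : ContinuousLinearMap.adjoint Qs = J ∘L Q ∘L J := by
        rw [hQsdef]
        ext x
        simp [sharp, adjoint_comp, adjoint_adjoint, hJsa]
      rw [h1]
      simp [hJJ, hqg]
    have hA : ContinuousLinearMap.adjoint F (J g) = 0 := by
      rw [hF, hsharpP, adjoint_comp]
      simp [map_sub, adj_one, hQstar, hQsstar]
    calc (inner ℂ (J (F h)) g : ℂ)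
        = inner ℂ (ContinuousLinearMap.adjoint J (F h)) g := by rw [hJsa]
      _ = inner ℂ (F h) (J g) := adjoint_inner_left J g (F h)
      _ = inner ℂ h (ContinuousLinearMap.adjoint F (J g)) := (adjoint_inner_right F h (J g)).symm
      _ = 0 := by rw [hA, inner_zero_right]
  -- Part 4
  have hFsharp : sharp J F = F := by
    rw [hF, sharp_comp, sharp_sharp]
  have hFfix : ∀ x, F (F x) = F x := by
    intro x
    rw [hFx (F x), QsF, QF]
    simp
  have hjF : jperp J (LinearMap.range (F : H →ₗ[ℂ] H)) = LinearMap.ker (F : H →ₗ[ℂ] H) := by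
    rw [jperp_range J hJsa hJ2 F, hFsharp]
  have part4 : KreinPseudoRegular J (jperp J S) := by
    constructor
    · rw [hjp]
      exact isClosed_ker Qs
    · refine ⟨LinearMap.range (F : H →ₗ[ℂ] H), ⟨?_, ?_, ?_⟩, ?_, ?_⟩
      · -- closed range
        have : (LinearMap.range (F : H →ₗ[ℂ] H) : Set H) = (LinearMap.ker ((1 - F : H →L[ℂ] H) : H →ₗ[ℂ] H) : Set H) := by
          ext f
          simp only [SetLike.mem_coe, LinearMap.mem_range, LinearMap.mem_ker,
            ContinuousLinearMap.coe_coe, sub_apply, ContinuousLinearMap.one_apply, sub_eq_zero]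
          constructor
          · rintro ⟨g, rfl⟩; exact (hFfix g).symm
          · intro h; exact ⟨f, h.symm⟩
        rw [this]
        exact isClosed_ker (1 - F)
      · -- sup = ⊤
        rw [hjF, eq_top_iff]
        intro x _
        have h1 : F (x - F x) = 0 := by rw [map_sub, hFfix, sub_self]
        have h2 : x = F x + (x - F x) := by abel
        rw [h2]
        exact Submodule.add_mem_sup ⟨x, rfl⟩ h1
      · -- inf = ⊥
        rw [hjF, Submodule.eq_bot_iff]
        intro f hf
        rw [Submodule.mem_inf] at hf
        obtain ⟨⟨g, rfl⟩, h2⟩ := hf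
        rw [LinearMap.mem_ker, ContinuousLinearMap.coe_coe] at h2
        rw [ContinuousLinearMap.coe_coe, ← hFfix g, h2]
      · -- M ⊔ isotropic = jperp J S
        have hiso : jperp J S ⊓ jperp J (jperp J S) = S ⊓ jperp J S := by
          have h1 : jperp J S = LinearMap.range (((1 : H →L[ℂ] H) - Qs : H →L[ℂ] H) : H →ₗ[ℂ] H) := by
            rw [hjp]
            ext f
            simp only [LinearMap.mem_ker, LinearMap.mem_range, ContinuousLinearMap.coe_coe, sub_apply, ContinuousLinearMap.one_apply]
            constructor
            · intro h; exact ⟨f, by rw [h, sub_zero]⟩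
            · rintro ⟨g, rfl⟩
              rw [map_sub, hqs, sub_self]
          have h2 : jperp J (jperp J S) = LinearMap.ker ((1 - Q : H →L[ℂ] H) : H →ₗ[ℂ] H) := by
            rw [h1, jperp_range J hJsa hJ2, ← hsharpP, sharp_sharp]
          ext f
          rw [Submodule.mem_inf, Submodule.mem_inf, h2, memS, memJ, LinearMap.mem_ker]
          simp only [ContinuousLinearMap.coe_coe, sub_apply, ContinuousLinearMap.one_apply, sub_eq_zero]
          constructor
          · rintro ⟨h1', h2'⟩; exact ⟨h2'.symm, h1'⟩
          · rintro ⟨h1', h2'⟩; exact ⟨h2', h1'.symm⟩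
        rw [hiso]
        exact part1
      · have hiso : jperp J S ⊓ jperp J (jperp J S) = S ⊓ jperp J S := by
          have h1 : jperp J S = LinearMap.range (((1 : H →L[ℂ] H) - Qs : H →L[ℂ] H) : H →ₗ[ℂ] H) := by
            rw [hjp]
            ext f
            simp only [LinearMap.mem_ker, LinearMap.mem_range, ContinuousLinearMap.coe_coe, sub_apply, ContinuousLinearMap.one_apply]
            constructor
            · intro h; exact ⟨f, by rw [h, sub_zero]⟩
            · rintro ⟨g, rfl⟩
              rw [map_sub, hqs, sub_self]
          have h2 : jperp J (jperp J S) = LinearMap.ker ((1 - Q : H →L[ℂ] H) : H →ₗ[ℂ] H) := by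
            rw [h1, jperp_range J hJsa hJ2, ← hsharpP, sharp_sharp]
          ext f
          rw [Submodule.mem_inf, Submodule.mem_inf, h2, memS, memJ, LinearMap.mem_ker]
          simp only [ContinuousLinearMap.coe_coe, sub_apply, ContinuousLinearMap.one_apply, sub_eq_zero]
          constructor
          · rintro ⟨h1', h2'⟩; exact ⟨h2'.symm, h1'⟩
          · rintro ⟨h1', h2'⟩; exact ⟨h2', h1'.symm⟩
        rw [hiso]
        exact part2
  exact ⟨part1, part2, part3, part4⟩
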